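/- Let n be a positive integer and let u : (0,∞) × (1,∞) → ℝ be a C² function satisfying ∂_t u(t,s) = (s²−1) ∂_s² u(t,s) + (n+1) s ∂_s u(t,s) for all t > 0 and s > 1. For t > 0 and σ > 1 define w(t,σ) = ∫_0^∞ ξ^{-1/2} u(t, σ+ξ) dξ. Assume: (i) for each t > 0 and σ > 1 the functions ξ ↦ ξ^{-1/2} u(t,σ+ξ), ξ^{-1/2} ∂_t u(t,σ+ξ), ξ^{-1/2} ∂_s u(t,σ+ξ), ξ^{-1/2} ∂_s² u(t,σ+ξ), ξ^{1/2} ∂_s u(t,σ+ξ), and ξ^{3/2} ∂_s² u(t,σ+ξ) are integrable on (0,∞); (ii) ξ^{1/2} u(t,σ+ξ) → 0 and ξ^{3/2} ∂_s u(t,σ+ξ) → 0 as ξ → ∞; (iii) differentiation under the integral sign is valid for w, i.e. ∂_t w(t,σ) = ∫_0^∞ ξ^{-1/2} ∂_t u(t,σ+ξ) dξ, ∂_σ w(t,σ) = ∫_0^∞ ξ^{-1/2} ∂_s u(t,σ+ξ) dξ, and ∂_σ² w(t,σ) = ∫_0^∞ ξ^{-1/2} ∂_s² u(t,σ+ξ)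 dξ. Then w satisfies ∂_t w = (σ²−1) ∂_σ² w + n σ ∂_σ w − ((2n−1)/4) w for all t > 0 and σ > 1. -/

import Mathlib

open Real Set MeasureTheory Filter Topology
set_option maxHeartbeats 800000

private lemma ibp_aux (a : ℝ) (ha : 0 < a) (φ φd : ℝ → ℝ)
    (hcont : ContinuousWithinAt φ (Set.Ici 0) 0)
    (hderiv : ∀ ξ ∈ Set.Ioi (0:ℝ), HasDerivAt φ (φd ξ) ξ)
    (hint1 : IntegrableOn (fun ξ : ℝ => ξ ^ (a - 1) * φ ξ) (Set.Ioi 0))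
    (hint2 : IntegrableOn (fun ξ : ℝ => ξ ^ a * φd ξ) (Set.Ioi 0))
    (hdecay : Tendsto (fun ξ : ℝ => ξ ^ a * φ ξ) atTop (𝓝 0)) :
    ∫ ξ in Set.Ioi (0:ℝ), ξ ^ a * φd ξ =
      -a * ∫ ξ in Set.Ioi (0:ℝ), ξ ^ (a - 1) * φ ξ := by
  have hF0 : (0:ℝ) ^ a * φ 0 = 0 := by rw [Real.zero_rpow ha.ne', zero_mul]
  have hcontF : ContinuousWithinAt (fun ξ : ℝ => ξ ^ a * φ ξ) (Set.Ici 0) 0 :=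
    ((Real.continuousAt_rpow_const 0 a (Or.inr ha.le)).continuousWithinAt).mul hcont
  have hderivF : ∀ ξ ∈ Set.Ioi (0:ℝ),
      HasDerivAt (fun ξ : ℝ => ξ ^ a * φ ξ)
        (a * (ξ ^ (a - 1) * φ ξ) + ξ ^ a * φd ξ) ξ := by
    intro ξ hξ
    have h1 : HasDerivAt (fun x : ℝ => x ^ a) (a * ξ ^ (a - 1)) ξ :=
      Real.hasDerivAt_rpow_const (Or.inl (ne_of_gt hξ))
    have h2 := h1.mul (hderiv ξ hξ)
    rw [show a * (ξ ^ (a - 1) * φ ξ) = a * ξ ^ (a - 1) * φ ξ from (mul_assoc _ _ _).symm]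
    exact h2
  have hintF : IntegrableOn
      (fun ξ : ℝ => a * (ξ ^ (a - 1) * φ ξ) + ξ ^ a * φd ξ) (Set.Ioi 0) :=
    (hint1.const_mul a).add hint2
  have key := integral_Ioi_of_hasDerivAt_of_tendsto hcontF hderivF hintF hdecay
  rw [hF0, sub_zero] at key
  rw [MeasureTheory.integral_add (hint1.const_mul a) hint2,
    MeasureTheory.integral_const_mul _ _] at key
  linarith

theorem hyperbolic_integral_transform_heat_equation (n : ℕ) (hn : 0 < n)
    (u w : ℝ → ℝ → ℝ)
    (hu : ContDiffOn ℝ 2 (fun p : ℝ × ℝ => u p.1 p.2) (Set.Ioi 0 ×ˢ Set.Ioi 1))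
    (hueq : ∀ t ∈ Set.Ioi (0 : ℝ), ∀ s ∈ Set.Ioi (1 : ℝ),
      deriv (fun τ => u τ s) t =
        (s ^ 2 - 1) * deriv (fun x => deriv (fun y => u t y) x) s +
          ((n : ℝ) + 1) * s * deriv (fun x => u t x) s)
    (hw : ∀ t σ : ℝ, w t σ = ∫ ξ in Set.Ioi (0 : ℝ), ξ ^ (-(1 : ℝ) / 2) * u t (σ + ξ))
    -- (i) integrability assumptions
    (hint₁ : ∀ t ∈ Set.Ioi (0 : ℝ), ∀ σ ∈ Set.Ioi (1 : ℝ),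
      IntegrableOn (fun ξ : ℝ => ξ ^ (-(1 : ℝ) / 2) * u t (σ + ξ)) (Set.Ioi 0))
    (hint₂ : ∀ t ∈ Set.Ioi (0 : ℝ), ∀ σ ∈ Set.Ioi (1 : ℝ),
      IntegrableOn (fun ξ : ℝ => ξ ^ (-(1 : ℝ) / 2) * deriv (fun τ => u τ (σ + ξ)) t)
        (Set.Ioi 0))
    (hint₃ : ∀ t ∈ Set.Ioi (0 : ℝ), ∀ σ ∈ Set.Ioi (1 : ℝ),
      IntegrableOn (fun ξ : ℝ => ξ ^ (-(1 : ℝ) / 2) * deriv (fun x => u t x) (σ + ξ))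
        (Set.Ioi 0))
    (hint₄ : ∀ t ∈ Set.Ioi (0 : ℝ), ∀ σ ∈ Set.Ioi (1 : ℝ),
      IntegrableOn
        (fun ξ : ℝ => ξ ^ (-(1 : ℝ) / 2) * deriv (fun x => deriv (fun y => u t y) x) (σ + ξ))
        (Set.Ioi 0))
    (hint₅ : ∀ t ∈ Set.Ioi (0 : ℝ), ∀ σ ∈ Set.Ioi (1 : ℝ),
      IntegrableOn (fun ξ : ℝ => ξ ^ ((1 : ℝ) / 2) * deriv (fun x => u t x) (σ + ξ))
        (Set.Ioi 0))
    (hint₆ : ∀ t ∈ Set.Ioi (0 : ℝ), ∀ σ ∈ Set.Ioi (1 : ℝ),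
      IntegrableOn
        (fun ξ : ℝ => ξ ^ ((3 : ℝ) / 2) * deriv (fun x => deriv (fun y => u t y) x) (σ + ξ))
        (Set.Ioi 0))
    -- (ii) decay assumptions
    (hdecay₁ : ∀ t ∈ Set.Ioi (0 : ℝ), ∀ σ ∈ Set.Ioi (1 : ℝ),
      Tendsto (fun ξ : ℝ => ξ ^ ((1 : ℝ) / 2) * u t (σ + ξ)) atTop (𝓝 0))
    (hdecay₂ : ∀ t ∈ Set.Ioi (0 : ℝ), ∀ σ ∈ Set.Ioi (1 : ℝ),
      Tendsto (fun ξ : ℝ => ξ ^ ((3 : ℝ) / 2) * deriv (fun x => u t x) (σ + ξ)) atTop (𝓝 0))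
    -- (iii) differentiation under the integral sign
    (hdiff₁ : ∀ t ∈ Set.Ioi (0 : ℝ), ∀ σ ∈ Set.Ioi (1 : ℝ),
      deriv (fun τ => w τ σ) t =
        ∫ ξ in Set.Ioi (0 : ℝ), ξ ^ (-(1 : ℝ) / 2) * deriv (fun τ => u τ (σ + ξ)) t)
    (hdiff₂ : ∀ t ∈ Set.Ioi (0 : ℝ), ∀ σ ∈ Set.Ioi (1 : ℝ),
      deriv (fun x => w t x) σ =
        ∫ ξ in Set.Ioi (0 : ℝ), ξ ^ (-(1 : ℝ) / 2) * deriv (fun x => u t x) (σ + ξ))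
    (hdiff₃ : ∀ t ∈ Set.Ioi (0 : ℝ), ∀ σ ∈ Set.Ioi (1 : ℝ),
      deriv (fun x => deriv (fun y => w t y) x) σ =
        ∫ ξ in Set.Ioi (0 : ℝ),
          ξ ^ (-(1 : ℝ) / 2) * deriv (fun x => deriv (fun y => u t y) x) (σ + ξ)) :
    ∀ t ∈ Set.Ioi (0 : ℝ), ∀ σ ∈ Set.Ioi (1 : ℝ),
      deriv (fun τ => w τ σ) t =
        (σ ^ 2 - 1) * deriv (fun x => deriv (fun y => w t y) x) σ +
          (n : ℝ) * σ * deriv (fun x => w t x) σ - (2 * (n : ℝ) - 1) / 4 * w t σ := by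
  intro t ht σ hσ
  have ht' : (0:ℝ) < t := ht
  have hσ' : (1:ℝ) < σ := hσ
  have hmem : ∀ ξ : ℝ, 0 ≤ ξ → σ + ξ ∈ Set.Ioi (1:ℝ) := by
    intro ξ hξ; simp only [Set.mem_Ioi]; linarith
  -- smoothness of the slice
  have hg2 : ContDiffOn ℝ 2 (fun x => u t x) (Set.Ioi 1) := by
    have h := hu.comp ((contDiff_prodMk_right (𝕜 := ℝ) (n := 2) t).contDiffOn
      (s := Set.Ioi (1:ℝ))) (fun x hx => Set.mk_mem_prod ht hx)
    exact h
  have hg1 : ContDiffOn ℝ 1 (deriv (fun x => u t x)) (Set.Ioi 1) :=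
    hg2.deriv_of_isOpen (m := 1) isOpen_Ioi (by norm_num)
  have hg0 : ContinuousOn (deriv (fun x => deriv (fun y => u t y) x)) (Set.Ioi 1) :=
    (hg1.deriv_of_isOpen (m := 0) isOpen_Ioi (by norm_num)).continuousOn
  have hd1 : ∀ x ∈ Set.Ioi (1:ℝ), HasDerivAt (fun x => u t x) (deriv (fun x => u t x) x) x :=
    fun x hx => ((hg2.contDiffAt (isOpen_Ioi.mem_nhds hx)).differentiableAt
      (by norm_num)).hasDerivAt
  have hd2 : ∀ x ∈ Set.Ioi (1:ℝ), HasDerivAt (deriv (fun x => u t x))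
      (deriv (fun x => deriv (fun y => u t y) x) x) x :=
    fun x hx => ((hg1.contDiffAt (isOpen_Ioi.mem_nhds hx)).differentiableAt
      one_ne_zero).hasDerivAt
  -- shifted derivative facts
  have hshift0 : ∀ ξ ∈ Set.Ioi (0:ℝ),
      HasDerivAt (fun ζ : ℝ => u t (σ + ζ)) (deriv (fun x => u t x) (σ + ξ)) ξ := by
    intro ξ hξ
    have hadd : HasDerivAt (fun ζ : ℝ => σ + ζ) 1 ξ := (hasDerivAt_id ξ).const_add σ
    have h := (hd1 (σ + ξ) (hmem ξ (le_of_lt hξ))).comp ξ hadd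
    rw [mul_one] at h
    exact h
  have hshift1 : ∀ ξ ∈ Set.Ioi (0:ℝ),
      HasDerivAt (fun ζ : ℝ => deriv (fun x => u t x) (σ + ζ))
        (deriv (fun x => deriv (fun y => u t y) x) (σ + ξ)) ξ := by
    intro ξ hξ
    have hadd : HasDerivAt (fun ζ : ℝ => σ + ζ) 1 ξ := (hasDerivAt_id ξ).const_add σ
    have h := (hd2 (σ + ξ) (hmem ξ (le_of_lt hξ))).comp ξ hadd
    rw [mul_one] at h
    exact h
  -- continuity within Ici 0 at 0 of the shifted functions
  have hcont0 : ContinuousWithinAt (fun ζ : ℝ => u t (σ + ζ)) (Set.Ici 0) 0 := by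
    have hc : ContinuousAt (fun x => u t x) (σ + 0) := by
      simpa using hg2.continuousOn.continuousAt (isOpen_Ioi.mem_nhds hσ')
    exact (hc.comp ((continuous_const.add continuous_id).continuousAt)).continuousWithinAt
  have hcont1 : ContinuousWithinAt (fun ζ : ℝ => deriv (fun x => u t x) (σ + ζ))
      (Set.Ici 0) 0 := by
    have hc : ContinuousAt (deriv (fun x => u t x)) (σ + 0) := by
      simpa using hg1.continuousOn.continuousAt (isOpen_Ioi.mem_nhds hσ')
    exact (hc.comp ((continuous_const.add continuous_id).continuousAt)).continuousWithinAt
  -- exponent conversions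
  have he1 : (-(1:ℝ)/2) = (1:ℝ)/2 - 1 := by norm_num
  have he2 : ((1:ℝ)/2) = (3:ℝ)/2 - 1 := by norm_num
  -- integrability of ξ^{1/2} * second derivative, by comparison
  have hint_half : IntegrableOn
      (fun ξ : ℝ => ξ ^ ((1:ℝ)/2) * deriv (fun x => deriv (fun y => u t y) x) (σ + ξ))
      (Set.Ioi 0) := by
    have A4 := hint₄ t ht σ hσ
    have A6 := hint₆ t ht σ hσ
    have hmeas : AEStronglyMeasurable
        (fun ξ : ℝ => ξ ^ ((1:ℝ)/2) * deriv (fun x => deriv (fun y => u t y) x) (σ + ξ))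
        (volume.restrict (Set.Ioi 0)) := by
      refine (ContinuousOn.mul ?_ ?_).aestronglyMeasurable measurableSet_Ioi
      · exact fun x hx =>
          (Real.continuousAt_rpow_const x _ (Or.inl (ne_of_gt hx))).continuousWithinAt
      · exact hg0.comp ((continuous_const.add continuous_id).continuousOn)
          (fun ξ hξ => hmem ξ (le_of_lt hξ))
    refine (A4.norm.add A6.norm).mono' hmeas ?_
    filter_upwards [ae_restrict_mem measurableSet_Ioi] with ξ hξ
    have hξ0 : (0:ℝ) < ξ := hξ
    have habs := abs_nonneg (deriv (fun x => deriv (fun y => u t y) x) (σ + ξ))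
    have hle : ξ ^ ((1:ℝ)/2) ≤ ξ ^ (-(1:ℝ)/2) + ξ ^ ((3:ℝ)/2) := by
      rcases le_total ξ 1 with h | h
      · have h1 := Real.rpow_le_rpow_of_exponent_ge hξ0 h
          (by norm_num : -(1:ℝ)/2 ≤ (1:ℝ)/2)
        have h2 : (0:ℝ) ≤ ξ ^ ((3:ℝ)/2) := Real.rpow_nonneg hξ0.le _
        linarith
      · have h1 := Real.rpow_le_rpow_of_exponent_le h
          (by norm_num : (1:ℝ)/2 ≤ (3:ℝ)/2)
        have h2 : (0:ℝ) ≤ ξ ^ (-(1:ℝ)/2) := Real.rpow_nonneg hξ0.le _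
        linarith
    have h3 := mul_le_mul_of_nonneg_right hle
      (abs_nonneg (deriv (fun x => deriv (fun y => u t y) x) (σ + ξ)))
    simp only [Pi.add_apply, Real.norm_eq_abs, abs_mul,
      abs_of_nonneg (Real.rpow_nonneg hξ0.le ((1:ℝ)/2)),
      abs_of_nonneg (Real.rpow_nonneg hξ0.le (-(1:ℝ)/2)),
      abs_of_nonneg (Real.rpow_nonneg hξ0.le ((3:ℝ)/2))]
    nlinarith [habs]
  -- decay of ξ^{1/2} * first derivative
  have hdecay_half : Tendsto
      (fun ξ : ℝ => ξ ^ ((1:ℝ)/2) * deriv (fun x => u t x) (σ + ξ)) atTop (𝓝 0) := by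
    have h := (hdecay₂ t ht σ hσ).mul tendsto_inv_atTop_zero
    rw [mul_zero] at h
    refine h.congr' ?_
    filter_upwards [eventually_gt_atTop (0:ℝ)] with ξ hξ
    rw [mul_right_comm]
    congr 1
    rw [← Real.rpow_neg_one ξ, ← Real.rpow_add hξ]
    norm_num
  -- the three integration-by-parts identities
  have hIBP3 : ∫ ξ in Set.Ioi (0:ℝ), ξ ^ ((1:ℝ)/2) * deriv (fun x => u t x) (σ + ξ) =
      -(1/2) * ∫ ξ in Set.Ioi (0:ℝ), ξ ^ (-(1:ℝ)/2) * u t (σ + ξ) := by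
    have h := ibp_aux (1/2) (by norm_num) (fun ζ => u t (σ + ζ))
      (fun ξ => deriv (fun x => u t x) (σ + ξ)) hcont0 hshift0
      (by simpa only [show ((1:ℝ)/2 - 1) = -(1:ℝ)/2 from by norm_num] using hint₁ t ht σ hσ) (hint₅ t ht σ hσ) (hdecay₁ t ht σ hσ)
    rw [show ((1:ℝ)/2 - 1) = -(1:ℝ)/2 by norm_num] at h
    exact h
  have hIBP2 : ∫ ξ in Set.Ioi (0:ℝ),
      ξ ^ ((1:ℝ)/2) * deriv (fun x => deriv (fun y => u t y) x) (σ + ξ) =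
      -(1/2) * ∫ ξ in Set.Ioi (0:ℝ), ξ ^ (-(1:ℝ)/2) * deriv (fun x => u t x) (σ + ξ) := by
    have h := ibp_aux (1/2) (by norm_num) (fun ζ => deriv (fun x => u t x) (σ + ζ))
      (fun ξ => deriv (fun x => deriv (fun y => u t y) x) (σ + ξ)) hcont1 hshift1
      (by simpa only [show ((1:ℝ)/2 - 1) = -(1:ℝ)/2 from by norm_num] using hint₃ t ht σ hσ) hint_half hdecay_half
    rw [show ((1:ℝ)/2 - 1) = -(1:ℝ)/2 by norm_num] at h
    exact h
  have hIBP1 : ∫ ξ in Set.Ioi (0:ℝ),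
      ξ ^ ((3:ℝ)/2) * deriv (fun x => deriv (fun y => u t y) x) (σ + ξ) =
      -(3/2) * ∫ ξ in Set.Ioi (0:ℝ), ξ ^ ((1:ℝ)/2) * deriv (fun x => u t x) (σ + ξ) := by
    have h := ibp_aux ((3:ℝ)/2) (by norm_num) (fun ζ => deriv (fun x => u t x) (σ + ζ))
      (fun ξ => deriv (fun x => deriv (fun y => u t y) x) (σ + ξ)) hcont1 hshift1
      (by simpa only [show ((3:ℝ)/2 - 1) = (1:ℝ)/2 from by norm_num] using hint₅ t ht σ hσ) (hint₆ t ht σ hσ) (hdecay₂ t ht σ hσ)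
    rw [show ((3:ℝ)/2 - 1) = (1:ℝ)/2 by norm_num] at h
    exact h
  -- pointwise expansion of the heat equation under the transform
  have hpt : Set.EqOn
      (fun ξ : ℝ => ξ ^ (-(1:ℝ)/2) * deriv (fun τ => u τ (σ + ξ)) t)
      (fun ξ : ℝ =>
        (σ ^ 2 - 1) * (ξ ^ (-(1:ℝ)/2) * deriv (fun x => deriv (fun y => u t y) x) (σ + ξ)) +
        (2 * σ) * (ξ ^ ((1:ℝ)/2) * deriv (fun x => deriv (fun y => u t y) x) (σ + ξ)) +
        ξ ^ ((3:ℝ)/2) * deriv (fun x => deriv (fun y => u t y) x) (σ + ξ) +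
        (((n:ℝ) + 1) * σ) * (ξ ^ (-(1:ℝ)/2) * deriv (fun x => u t x) (σ + ξ)) +
        ((n:ℝ) + 1) * (ξ ^ ((1:ℝ)/2) * deriv (fun x => u t x) (σ + ξ)))
      (Set.Ioi 0) := by
    intro ξ hξ
    have hξ0 : (0:ℝ) < ξ := hξ
    have r1 : ξ ^ ((1:ℝ)/2) = ξ * ξ ^ (-(1:ℝ)/2) := by
      rw [show ((1:ℝ)/2) = (1:ℝ) + (-(1:ℝ)/2) by norm_num, Real.rpow_add hξ0,
        Real.rpow_one]
    have r2 : ξ ^ ((3:ℝ)/2) = ξ ^ 2 * ξ ^ (-(1:ℝ)/2) := by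
      rw [show ((3:ℝ)/2) = (2:ℝ) + (-(1:ℝ)/2) by norm_num, Real.rpow_add hξ0,
        show (2:ℝ) = ((2:ℕ):ℝ) by norm_num, Real.rpow_natCast]
    simp only
    rw [hueq t ht (σ + ξ) (hmem ξ (le_of_lt hξ0)), r1, r2]
    ring
  -- split the time-derivative integral
  have i1 : IntegrableOn (fun ξ : ℝ =>
      (σ ^ 2 - 1) * (ξ ^ (-(1:ℝ)/2) * deriv (fun x => deriv (fun y => u t y) x) (σ + ξ)))
      (Set.Ioi 0) := (hint₄ t ht σ hσ).const_mul _
  have i2 : IntegrableOn (fun ξ : ℝ =>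
      (2 * σ) * (ξ ^ ((1:ℝ)/2) * deriv (fun x => deriv (fun y => u t y) x) (σ + ξ)))
      (Set.Ioi 0) := hint_half.const_mul _
  have i3 := hint₆ t ht σ hσ
  have i4 : IntegrableOn (fun ξ : ℝ =>
      (((n:ℝ) + 1) * σ) * (ξ ^ (-(1:ℝ)/2) * deriv (fun x => u t x) (σ + ξ)))
      (Set.Ioi 0) := (hint₃ t ht σ hσ).const_mul _
  have i5 : IntegrableOn (fun ξ : ℝ =>
      ((n:ℝ) + 1) * (ξ ^ ((1:ℝ)/2) * deriv (fun x => u t x) (σ + ξ)))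
      (Set.Ioi 0) := (hint₅ t ht σ hσ).const_mul _
  have hsplit : (∫ ξ in Set.Ioi (0:ℝ), ξ ^ (-(1:ℝ)/2) * deriv (fun τ => u τ (σ + ξ)) t) =
      (σ ^ 2 - 1) * (∫ ξ in Set.Ioi (0:ℝ),
        ξ ^ (-(1:ℝ)/2) * deriv (fun x => deriv (fun y => u t y) x) (σ + ξ)) +
      (2 * σ) * (∫ ξ in Set.Ioi (0:ℝ),
        ξ ^ ((1:ℝ)/2) * deriv (fun x => deriv (fun y => u t y) x) (σ + ξ)) +
      (∫ ξ in Set.Ioi (0:ℝ),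
        ξ ^ ((3:ℝ)/2) * deriv (fun x => deriv (fun y => u t y) x) (σ + ξ)) +
      (((n:ℝ) + 1) * σ) * (∫ ξ in Set.Ioi (0:ℝ),
        ξ ^ (-(1:ℝ)/2) * deriv (fun x => u t x) (σ + ξ)) +
      ((n:ℝ) + 1) * (∫ ξ in Set.Ioi (0:ℝ),
        ξ ^ ((1:ℝ)/2) * deriv (fun x => u t x) (σ + ξ)) := by
    rw [MeasureTheory.setIntegral_congr_fun measurableSet_Ioi hpt]
    rw [MeasureTheory.integral_add, MeasureTheory.integral_add, MeasureTheory.integral_add,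
      MeasureTheory.integral_add, MeasureTheory.integral_const_mul, MeasureTheory.integral_const_mul,
      MeasureTheory.integral_const_mul, MeasureTheory.integral_const_mul]
    exacts [i1, i2, (i1.add i2), i3, ((i1.add i2).add i3), i4, (((i1.add i2).add i3).add i4), i5]
  -- conclude
  rw [hdiff₁ t ht σ hσ, hdiff₂ t ht σ hσ, hdiff₃ t ht σ hσ, hw t σ, hsplit,
    hIBP1, hIBP2, hIBP3]
  ring
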